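/- Assume (H) and $\mathcal{R}_0=H'(0)G'(0)/(ab)>1$, and let $(u^*,v^*)$ be the unique positive root of $au=H(v)$, $bv=G(u)$. Then there exists $\varepsilon_1>0$ such that for every $\varepsilon\in[0,\varepsilon_1)$ the perturbed system $(a-\varepsilon)u=H(v)$, $(b-\varepsilon)v=G(u)$ has a unique positive root $(u^*_\varepsilon,v^*_\varepsilon)$, and the maps $\varepsilon\mapsto u^*_\varepsilon$ and $\varepsilon\mapsto v^*_\varepsilon$ are strictly increasing on $[0,\varepsilon_1)$. -/

import Mathlib

open Set Filter Topology

private lemma aux_super {F : ℝ → ℝ} (hF : StrictConcaveOn ℝ (Set.Ici 0) F) (h0 : F 0 = 0)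
    {t y : ℝ} (ht : 0 < t) (ht1 : t < 1) (hy : 0 < y) : t * F y < F (t * y) := by
  have h := hF.2 (x := y) (y := 0) (le_of_lt hy) Set.self_mem_Ici (ne_of_gt hy) ht
    (by linarith : (0:ℝ) < 1 - t) (by ring)
  simpa [h0, smul_eq_mul] using h

private lemma aux_props {H : ℝ → ℝ} (hreg : ContDiffOn ℝ 2 H (Set.Ici 0))
    (h' : ∀ z : ℝ, 0 ≤ z → 0 < deriv H z) (h'' : ∀ z : ℝ, 0 < z → deriv (deriv H) z < 0) :
    StrictMonoOn H (Set.Ici 0) ∧ StrictConcaveOn ℝ (Set.Ici 0) H := by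
  have hc : ContinuousOn H (Set.Ici 0) := hreg.continuousOn
  constructor
  · refine strictMonoOn_of_deriv_pos (convex_Ici 0) hc ?_
    intro x hx; rw [interior_Ici] at hx; exact h' x (le_of_lt hx)
  · refine strictConcaveOn_of_deriv2_neg (convex_Ici 0) hc ?_
    intro x hx; rw [interior_Ici] at hx
    simpa [Function.iterate_succ, Function.iterate_zero] using h'' x hx

/-- Under (H) and `R₀ > 1`, for all small `ε ≥ 0` the perturbed system
`(a-ε)u = H(v)`, `(b-ε)v = G(u)` has a unique positive root `(u*_ε, v*_ε)`,
strictly increasing in `ε`. -/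
theorem stmt5 (a b : ℝ) (ha : 0 < a) (hb : 0 < b) (H G : ℝ → ℝ)
    (hHreg : ContDiffOn ℝ 2 H (Set.Ici 0)) (hGreg : ContDiffOn ℝ 2 G (Set.Ici 0))
    (hH0 : H 0 = 0) (hG0 : G 0 = 0)
    (hH' : ∀ z : ℝ, 0 ≤ z → 0 < deriv H z) (hG' : ∀ z : ℝ, 0 ≤ z → 0 < deriv G z)
    (hH'' : ∀ z : ℝ, 0 < z → deriv (deriv H) z < 0)
    (hG'' : ∀ z : ℝ, 0 < z → deriv (deriv G) z < 0)
    (hhat : ∃ zhat : ℝ, 0 < zhat ∧ G (H zhat / a) < b * zhat)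
    (hR0 : a * b < deriv H 0 * deriv G 0)
    (ustar vstar : ℝ) (hu : 0 < ustar) (hv : 0 < vstar)
    (heq1 : a * ustar = H vstar) (heq2 : b * vstar = G ustar)
    (huniq : ∀ p q : ℝ, 0 < p → 0 < q → a * p = H q → b * q = G p →
      p = ustar ∧ q = vstar) :
    ∃ ε1 : ℝ, 0 < ε1 ∧ ∃ U V : ℝ → ℝ,
      (∀ ε ∈ Set.Ico (0 : ℝ) ε1,
        (0 < U ε ∧ 0 < V ε ∧ (a - ε) * U ε = H (V ε) ∧ (b - ε) * V ε = G (U ε)) ∧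
        (∀ p q : ℝ, 0 < p → 0 < q → (a - ε) * p = H q → (b - ε) * q = G p →
          p = U ε ∧ q = V ε)) ∧
      StrictMonoOn U (Set.Ico 0 ε1) ∧ StrictMonoOn V (Set.Ico 0 ε1) := by
  clear hu hv heq1 heq2 huniq
  obtain ⟨z, hz, hzlt⟩ := hhat
  obtain ⟨hHm, hHcv⟩ := aux_props hHreg hH' hH''
  obtain ⟨hGm, hGcv⟩ := aux_props hGreg hG' hG''
  have hHcont := hHreg.continuousOn
  have hGcont := hGreg.continuousOn
  have hHpos : ∀ v : ℝ, 0 < v → 0 < H v := by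
    intro v hv0
    have := hHm Set.self_mem_Ici (le_of_lt hv0) hv0
    rwa [hH0] at this
  -- the slope comparison lemma
  have hslopelem : ∀ c : ℝ, 0 < c → ∀ x y : ℝ, 0 < x → x < y →
      x * G (H y / c) < y * G (H x / c) := by
    intro c hc x y hx hxy
    have hy : 0 < y := hx.trans hxy
    have ht : 0 < x / y := div_pos hx hy
    have ht1 : x / y < 1 := (div_lt_one hy).mpr hxy
    have hH1 : (x / y) * H y < H x := by
      have h := aux_super hHcv hH0 ht ht1 hy
      rwa [div_mul_cancel₀ _ (ne_of_gt hy)] at h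
    have hHy : 0 < H y := hHpos y hy
    have step1 : (x / y) * (H y / c) < H x / c := by
      rw [← mul_div_assoc]
      exact (div_lt_div_iff_of_pos_right hc).mpr hH1
    have step2 : G ((x / y) * (H y / c)) < G (H x / c) :=
      hGm (Set.mem_Ici.mpr (le_of_lt (mul_pos ht (div_pos hHy hc))))
        (Set.mem_Ici.mpr (div_nonneg (hHpos x hx).le hc.le)) step1
    have step3 : (x / y) * G (H y / c) < G ((x / y) * (H y / c)) :=
      aux_super hGcv hG0 ht ht1 (div_pos hHy hc)
    have hcomb : (x / y) * G (H y / c) < G (H x / c) := step3.trans step2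
    calc x * G (H y / c) = y * ((x / y) * G (H y / c)) := by field_simp
      _ < y * G (H x / c) := (mul_lt_mul_iff_right₀ hy).mpr hcomb
  -- choose ε1 via continuity of the zhat condition
  have hHz : 0 < H z := hHpos z hz
  have hGA : ContinuousAt G (H z / a) := by
    have hmem : Set.Ici (0:ℝ) ∈ 𝓝 (H z / a) :=
      mem_of_superset (isOpen_Ioi.mem_nhds (div_pos hHz ha)) Set.Ioi_subset_Ici_self
    exact (hGreg.contDiffAt hmem).continuousAt
  have hchi : ContinuousAt (fun ε : ℝ => G (H z / (a - ε)) - (b - ε) * z) 0 := by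
    have h1 : ContinuousAt (fun ε : ℝ => H z / (a - ε)) 0 :=
      continuousAt_const.div (continuousAt_const.sub continuousAt_id) (by simpa using ha.ne')
    have hGA' : ContinuousAt G ((fun ε : ℝ => H z / (a - ε)) 0) := by
      have heq : (fun ε : ℝ => H z / (a - ε)) 0 = H z / a := by norm_num
      rw [heq]; exact hGA
    have h2 : ContinuousAt ((fun t => G t) ∘ (fun ε : ℝ => H z / (a - ε))) 0 :=
      ContinuousAt.comp hGA' h1
    exact h2.sub ((continuousAt_const.sub continuousAt_id).mul continuousAt_const)
  have hchi0 : (fun ε : ℝ => G (H z / (a - ε)) - (b - ε) * z) 0 < 0 := by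
    simpa using sub_neg.mpr hzlt
  obtain ⟨δ, hδ, hball⟩ := Metric.mem_nhds_iff.mp
    (hchi.preimage_mem_nhds (isOpen_Iio.mem_nhds hchi0))
  set ε1 : ℝ := min δ (min a b) with hε1def
  have hε1 : 0 < ε1 := lt_min hδ (lt_min ha hb)
  have hεa : ∀ ε : ℝ, ε < ε1 → ε < a := fun ε h =>
    lt_of_lt_of_le h (le_trans (min_le_right _ _) (min_le_left a b))
  have hεb : ∀ ε : ℝ, ε < ε1 → ε < b := fun ε h =>
    lt_of_lt_of_le h (le_trans (min_le_right _ _) (min_le_right a b))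
  -- existence of a positive root for each small ε
  have key : ∀ ε : ℝ, 0 ≤ ε → ε < ε1 → ∃ v : ℝ, 0 < v ∧
      G (H v / (a - ε)) = (b - ε) * v := by
    intro ε hε0 hεlt
    have hc : 0 < a - ε := sub_pos.mpr (hεa ε hεlt)
    have hd : 0 < b - ε := sub_pos.mpr (hεb ε hεlt)
    have hgz : G (H z / (a - ε)) - (b - ε) * z < 0 := by
      have hmem : ε ∈ Metric.ball (0:ℝ) δ := by
        simp only [Metric.mem_ball, Real.dist_eq, sub_zero, abs_of_nonneg hε0]
        exact lt_of_lt_of_le hεlt (min_le_left _ _)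
      exact hball hmem
    have hHd0 : DifferentiableAt ℝ H 0 := by
      by_contra hcon
      have h := hH' 0 le_rfl
      rw [deriv_zero_of_not_differentiableAt hcon] at h
      exact lt_irrefl 0 h
    have hGd0 : DifferentiableAt ℝ G 0 := by
      by_contra hcon
      have h := hG' 0 le_rfl
      rw [deriv_zero_of_not_differentiableAt hcon] at h
      exact lt_irrefl 0 h
    have h1 : HasDerivAt (fun v : ℝ => H v / (a - ε)) (deriv H 0 / (a - ε)) 0 :=
      hHd0.hasDerivAt.div_const _
    have h2 : HasDerivAt G (deriv G 0) ((fun v : ℝ => H v / (a - ε)) 0) := by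
      have hval : (fun v : ℝ => H v / (a - ε)) 0 = 0 := by simp [hH0]
      rw [hval]; exact hGd0.hasDerivAt
    have h3 : HasDerivAt (fun v : ℝ => G (H v / (a - ε)) - (b - ε) * v)
        (deriv G 0 * (deriv H 0 / (a - ε)) - (b - ε)) 0 := by
      have h := (h2.comp 0 h1).sub ((hasDerivAt_id (0:ℝ)).const_mul (b - ε))
      rw [mul_one] at h
      exact h
    have hLpos : 0 < deriv G 0 * (deriv H 0 / (a - ε)) - (b - ε) := by
      rw [sub_pos, ← mul_div_assoc, lt_div_iff₀ hc]
      nlinarith [mul_nonneg hε0 hb.le, mul_nonneg hε0 (sub_pos.mpr (hεa ε hεlt)).le]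
    set g : ℝ → ℝ := fun v => G (H v / (a - ε)) - (b - ε) * v with hgdef
    have hg0 : g 0 = 0 := by simp [hgdef, hH0, hG0]
    have hslopet := hasDerivAt_iff_tendsto_slope.mp h3
    have hev : ∀ᶠ v in 𝓝[>] (0:ℝ), 0 < slope g 0 v :=
      (hslopet.eventually (eventually_gt_nhds hLpos)).filter_mono
        (nhdsWithin_mono 0 (fun x hx => Set.mem_compl_singleton_iff.mpr (ne_of_gt hx)))
    have hev2 : ∀ᶠ v in 𝓝[>] (0:ℝ), v < z :=
      eventually_nhdsWithin_of_eventually_nhds (eventually_lt_nhds hz)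
    have hev3 : ∀ᶠ v in 𝓝[>] (0:ℝ), (0:ℝ) < v := eventually_mem_nhdsWithin
    obtain ⟨v₀, hs, hvz, hv0⟩ := (hev.and (hev2.and hev3)).exists
    have hgv₀ : 0 < g v₀ := by
      have h4 : slope g 0 v₀ = g v₀ / v₀ := by
        rw [slope_def_field, hg0, sub_zero, sub_zero]
      rw [h4] at hs
      have h5 := mul_pos hs hv0
      rwa [div_mul_cancel₀ _ (ne_of_gt hv0)] at h5
    have hsub : Set.Icc v₀ z ⊆ Set.Ici 0 := fun x hx => Set.mem_Ici.mpr (le_trans hv0.le hx.1)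
    have hcontg : ContinuousOn g (Set.Icc v₀ z) := by
      apply ContinuousOn.sub
      · refine ContinuousOn.comp hGcont ((hHcont.mono hsub).div_const _) ?_
        intro x hx
        exact Set.mem_Ici.mpr (div_nonneg
          (by rw [← hH0]; exact hHm.monotoneOn Set.self_mem_Ici (hsub hx) (Set.mem_Ici.mp (hsub hx))) hc.le)
      · exact (continuous_const.mul continuous_id).continuousOn
    have h0mem : (0:ℝ) ∈ Set.Icc (g z) (g v₀) := ⟨le_of_lt hgz, le_of_lt hgv₀⟩
    obtain ⟨v, hvmem, hgv⟩ := intermediate_value_Icc' (le_of_lt hvz) hcontg h0mem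
    exact ⟨v, lt_of_lt_of_le hv0 hvmem.1, sub_eq_zero.mp hgv⟩
  -- uniqueness of the positive root
  have huniqV : ∀ ε : ℝ, 0 ≤ ε → ε < ε1 → ∀ v w : ℝ, 0 < v → 0 < w →
      G (H v / (a - ε)) = (b - ε) * v → G (H w / (a - ε)) = (b - ε) * w → v = w := by
    intro ε hε0 hεlt v w hv0 hw0 hev hew
    have hc : 0 < a - ε := sub_pos.mpr (hεa ε hεlt)
    have hd : 0 < b - ε := sub_pos.mpr (hεb ε hεlt)
    rcases lt_trichotomy v w with h | h | h
    · exfalso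
      have hsl := hslopelem _ hc v w hv0 h
      rw [hev, hew] at hsl
      nlinarith
    · exact h
    · exfalso
      have hsl := hslopelem _ hc w v hw0 h
      rw [hev, hew] at hsl
      nlinarith
  -- choose the root function V
  have key2 : ∀ ε : ℝ, ∃ v : ℝ, ε ∈ Set.Ico (0:ℝ) ε1 →
      (0 < v ∧ G (H v / (a - ε)) = (b - ε) * v) := by
    intro ε
    by_cases h : ε ∈ Set.Ico (0:ℝ) ε1
    · obtain ⟨v, hv1, hv2⟩ := key ε h.1 h.2
      exact ⟨v, fun _ => ⟨hv1, hv2⟩⟩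
    · exact ⟨0, fun hmem => absurd hmem h⟩
  choose V hVspec using key2
  -- monotonicity of V
  have hVmono : ∀ ε ε' : ℝ, 0 ≤ ε → ε' < ε1 → ε < ε' → V ε < V ε' := by
    intro ε ε' hε0 hε'lt hlt
    have hεmem : ε ∈ Set.Ico (0:ℝ) ε1 := ⟨hε0, hlt.trans hε'lt⟩
    have hε'mem : ε' ∈ Set.Ico (0:ℝ) ε1 := ⟨hε0.trans hlt.le, hε'lt⟩
    obtain ⟨hV0, hVeq⟩ := hVspec ε hεmem
    obtain ⟨hV0', hVeq'⟩ := hVspec ε' hε'mem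
    have hc : 0 < a - ε := sub_pos.mpr (hεa ε hεmem.2)
    have hc' : 0 < a - ε' := sub_pos.mpr (hεa ε' hε'lt)
    have hd' : 0 < b - ε' := sub_pos.mpr (hεb ε' hε'lt)
    have hkey : (b - ε') * V ε < G (H (V ε) / (a - ε')) := by
      have h1 : H (V ε) / (a - ε) < H (V ε) / (a - ε') :=
        div_lt_div_of_pos_left (hHpos _ hV0) hc' (by linarith)
      have h2 : G (H (V ε) / (a - ε)) < G (H (V ε) / (a - ε')) :=
        hGm (Set.mem_Ici.mpr (div_nonneg (hHpos _ hV0).le hc.le))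
          (Set.mem_Ici.mpr (div_nonneg (hHpos _ hV0).le hc'.le)) h1
      have h3 : (b - ε') * V ε < (b - ε) * V ε := by nlinarith
      calc (b - ε') * V ε < (b - ε) * V ε := h3
        _ = G (H (V ε) / (a - ε)) := hVeq.symm
        _ < G (H (V ε) / (a - ε')) := h2
    rcases lt_trichotomy (V ε) (V ε') with h | h | h
    · exact h
    · exfalso
      rw [h, hVeq'] at hkey
      exact lt_irrefl _ hkey
    · exfalso
      have hsl := hslopelem _ hc' (V ε') (V ε) hV0' h
      rw [hVeq'] at hsl
      nlinarith
  -- assemble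
  refine ⟨ε1, hε1, fun ε => H (V ε) / (a - ε), V, ?_, ?_, ?_⟩
  · intro ε hε
    obtain ⟨hV0, hVeq⟩ := hVspec ε hε
    have hc : 0 < a - ε := sub_pos.mpr (hεa ε hε.2)
    have hd : 0 < b - ε := sub_pos.mpr (hεb ε hε.2)
    refine ⟨⟨div_pos (hHpos _ hV0) hc, hV0, ?_, ?_⟩, ?_⟩
    · field_simp
    · exact hVeq.symm
    · intro p q hp hq h1 h2
      have hpe : p = H q / (a - ε) := by
        rw [eq_div_iff (ne_of_gt hc)]; linarith
      have hq2 : G (H q / (a - ε)) = (b - ε) * q := by rw [← hpe]; exact h2.symm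
      have hqv : q = V ε := huniqV ε hε.1 hε.2 q (V ε) hq hV0 hq2 hVeq
      exact ⟨by rw [hpe, hqv], hqv⟩
  · intro x hx y hy hxy
    obtain ⟨hVx, _⟩ := hVspec x hx
    obtain ⟨hVy, _⟩ := hVspec y hy
    have hcx : 0 < a - x := sub_pos.mpr (hεa x hx.2)
    have hcy : 0 < a - y := sub_pos.mpr (hεa y hy.2)
    have hVlt : V x < V y := hVmono x y hx.1 hy.2 hxy
    have hH1 : H (V x) < H (V y) :=
      hHm (Set.mem_Ici.mpr hVx.le) (Set.mem_Ici.mpr (hVx.trans hVlt).le) hVlt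
    calc H (V x) / (a - x) < H (V x) / (a - y) :=
        div_lt_div_of_pos_left (hHpos _ hVx) hcy (by linarith)
      _ < H (V y) / (a - y) := (div_lt_div_iff_of_pos_right hcy).mpr hH1
  · intro x hx y hy hxy
    exact hVmono x y hx.1 hy.2 hxy
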